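/- For any graded algebra A and any coalgebra M over a commutative ring K, there is a unique action of the Lie algebra coder(M) of coderivations of M on the algebra Ã_M by degree-zero derivations (i.e. a Lie algebra homomorphism coder(M) → der(Ã_M)) such that δ(a_α) = a_{δ(α)} for every δ ∈ coder(M), a ∈ A, α ∈ M. -/

import Mathlib

set_option linter.unusedSectionVars false
set_option linter.unusedVariables false


open TensorProduct

namespace PG

variable {K : Type} [CommRing K]

section Coalgebra

variable {M : Type} [AddCommGroup M] [Module K M]

/-- Coassociativity of a comultiplication `μ : M → M ⊗ M`. -/
def Coassoc (μ : M →ₗ[K] M ⊗[K] M) : Prop :=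
  (TensorProduct.assoc K M M M).toLinearMap ∘ₗ (μ.rTensor M) ∘ₗ μ = (μ.lTensor M) ∘ₗ μ

/-- The iterated comultiplication `μ² : M → M ⊗ (M ⊗ M)`. -/
noncomputable def comul2 (μ : M →ₗ[K] M ⊗[K] M) : M →ₗ[K] M ⊗[K] (M ⊗[K] M) :=
  (μ.lTensor M) ∘ₗ μ

/-- The flip `p₂₁ : M ⊗ M → M ⊗ M`. -/
noncomputable def flipT (K M : Type) [CommRing K] [AddCommGroup M] [Module K M] :
    M ⊗[K] M →ₗ[K] M ⊗[K] M :=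
  (TensorProduct.comm K M M).toLinearMap

/-- The map `v̂ : M ⊗ M → M ⊗ M`, `v̂(α ⊗ β) = v(α ⊗ β²) β¹ ⊗ β³`, associated with a
bilinear form `v` on a coalgebra `(M, μ)`. -/
noncomputable def hat (μ : M →ₗ[K] M ⊗[K] M) (v : M ⊗[K] M →ₗ[K] K) :
    M ⊗[K] M →ₗ[K] M ⊗[K] M :=
  (LinearMap.lTensor M (TensorProduct.lid K M).toLinearMap)
  ∘ₗ (LinearMap.lTensor M (LinearMap.rTensor M v))
  ∘ₗ (LinearMap.lTensor M (TensorProduct.assoc K M M M).symm.toLinearMap)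
  ∘ₗ (TensorProduct.assoc K M M (M ⊗[K] M)).toLinearMap
  ∘ₗ (LinearMap.rTensor (M ⊗[K] M) (TensorProduct.comm K M M).toLinearMap)
  ∘ₗ (TensorProduct.assoc K M M (M ⊗[K] M)).symm.toLinearMap
  ∘ₗ (LinearMap.lTensor M (comul2 μ))

/-- A bilinear form `v` on a coalgebra `(M, μ)` is cyclic if `v̂` commutes with the flip. -/
noncomputable def IsCyclic (μ : M →ₗ[K] M ⊗[K] M) (v : M ⊗[K] M →ₗ[K] K) : Prop :=
  (hat μ v) ∘ₗ flipT K M = flipT K M ∘ₗ (hat μ v)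

/-- `ε : M → K` is a counit for the comultiplication `μ`. -/
def IsCounit (μ : M →ₗ[K] M ⊗[K] M) (ε : M →ₗ[K] K) : Prop :=
  ∀ α : M, (TensorProduct.lid K M) ((ε.rTensor M) (μ α)) = α ∧
    (TensorProduct.rid K M) ((ε.lTensor M) (μ α)) = α

/-- The convolution product on the dual of a coalgebra: `(f * g)(α) = f(α¹) g(α²)`. -/
noncomputable def conv (μ : M →ₗ[K] M ⊗[K] M) (f g : M →ₗ[K] K) : M →ₗ[K] K :=
  (LinearMap.mul' K K) ∘ₗ (TensorProduct.map f g) ∘ₗ μ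

/-- The inner action `α ↦ w(α¹) α² u(α³)` of a pair of dual elements on a coalgebra
(for `w = u⁻¹`, this is the inner automorphism `ᵘα`). -/
noncomputable def innerAct (μ : M →ₗ[K] M ⊗[K] M) (w u : M →ₗ[K] K) : M →ₗ[K] M :=
  (TensorProduct.rid K M).toLinearMap
  ∘ₗ (TensorProduct.lid K (M ⊗[K] K)).toLinearMap
  ∘ₗ (TensorProduct.map w (LinearMap.lTensor M u))
  ∘ₗ (LinearMap.lTensor M μ) ∘ₗ μ

/-- The inner coderivation `δ_φ(α) = φ(α²) α¹ − φ(α¹) α²` associated with `φ ∈ M*`. -/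
noncomputable def innerCoder (μ : M →ₗ[K] M ⊗[K] M) (φ : M →ₗ[K] K) : M →ₗ[K] M :=
  ((TensorProduct.rid K M).toLinearMap ∘ₗ (LinearMap.lTensor M φ) ∘ₗ μ)
  - ((TensorProduct.lid K M).toLinearMap ∘ₗ (φ.rTensor M) ∘ₗ μ)

/-- A coderivation of the coalgebra `(M, μ)`. -/
def IsCoderivation (μ : M →ₗ[K] M ⊗[K] M) (δ : M →ₗ[K] M) : Prop :=
  μ ∘ₗ δ = (δ.rTensor M + δ.lTensor M) ∘ₗ μ

/-- `D ⊗ id` as an endomorphism of `N ⊗ (N ⊗ N)`, for an endomorphism `D` of `N ⊗ N`. -/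
noncomputable def tend12 {N : Type} [AddCommGroup N] [Module K N]
    (D : N ⊗[K] N →ₗ[K] N ⊗[K] N) :
    N ⊗[K] (N ⊗[K] N) →ₗ[K] N ⊗[K] (N ⊗[K] N) :=
  (TensorProduct.assoc K N N N).toLinearMap ∘ₗ (LinearMap.rTensor N D)
    ∘ₗ (TensorProduct.assoc K N N N).symm.toLinearMap

end Coalgebra

end PG
namespace PG

/-- The sign `(−1)^m` for an integer `m`. -/
def sgn (m : ℤ) : ℤ := (((-1 : ℤˣ) ^ m : ℤˣ) : ℤ)

section Graded

variable {K : Type} [CommRing K]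
variable {A : Type} [NonUnitalRing A] [Module K A] [SMulCommClass K A A] [IsScalarTower K A A]

/-- The graded (signed) flip `a ⊗ b ↦ (−1)^{(|a|+n)(|b|+n)} b ⊗ a` on `A ⊗ A`,
for a `ℤ`-graded algebra `(A, 𝒜)`. -/
noncomputable def gflip (𝒜 : ℤ → Submodule K A) [DirectSum.Decomposition 𝒜] (n : ℤ) :
    A ⊗[K] A →ₗ[K] A ⊗[K] A :=
  (DirectSum.toModule K (ℤ × ℤ) (A ⊗[K] A) fun pq =>
      sgn ((pq.1 + n) * (pq.2 + n)) •
        ((TensorProduct.map (𝒜 pq.2).subtype (𝒜 pq.1).subtype) ∘ₗ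
          (TensorProduct.comm K (𝒜 pq.1) (𝒜 pq.2)).toLinearMap))
  ∘ₗ (TensorProduct.directSum K K (fun p : ℤ => 𝒜 p) (fun q : ℤ => 𝒜 q)).toLinearMap
  ∘ₗ (TensorProduct.map (DirectSum.decomposeLinearEquiv 𝒜).toLinearMap
        (DirectSum.decomposeLinearEquiv 𝒜).toLinearMap)

/-- The degree-`s` part of `A ⊗ A`: the sum of the images of `𝒜 i ⊗ 𝒜 j` with `i + j = s`. -/
noncomputable def grade2 (𝒜 : ℤ → Submodule K A) (s : ℤ) : Submodule K (A ⊗[K] A) :=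
  ⨆ i : ℤ, LinearMap.range (TensorProduct.map (𝒜 i).subtype (𝒜 (s - i)).subtype)

/-- An `n`-graded double bracket on a graded algebra `(A, 𝒜)`, given as a bilinear map
`db : A → A → A ⊗ A`: the grading condition, the `n`-graded antisymmetry
`⟪−,−⟫ ∘ P₂₁,ₙ = −P₂₁ ∘ ⟪−,−⟫`, and the `n`-graded Leibniz rule
`⟪a,bc⟫ = ⟪a,b⟫c + (−1)^{|a|ₙ|b|} b⟪a,c⟫`. -/
structure IsDoubleBracket (𝒜 : ℤ → Submodule K A) [DirectSum.Decomposition 𝒜] (n : ℤ)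
    (db : A →ₗ[K] A →ₗ[K] A ⊗[K] A) : Prop where
  grading : ∀ (p q : ℤ) (a b : A), a ∈ 𝒜 p → b ∈ 𝒜 q →
    db a b ∈ grade2 𝒜 (p + q + n)
  antisymm : ∀ (p q : ℤ) (a b : A), a ∈ 𝒜 p → b ∈ 𝒜 q →
    sgn ((p + n) * (q + n)) • db b a = - gflip 𝒜 0 (db a b)
  leibniz : ∀ (p q : ℤ) (a b c : A), a ∈ 𝒜 p → b ∈ 𝒜 q →
    db a (b * c) = (LinearMap.lTensor A (LinearMap.mulRight K c)) (db a b)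
      + sgn ((p + n) * q) • (LinearMap.rTensor A (LinearMap.mulLeft K b)) (db a c)

variable (𝒜 : ℤ → Submodule K A) [DirectSum.Decomposition 𝒜]

/-- The `n`-graded cyclic permutation `P₃₁₂,ₙ = (P₂₁,ₙ ⊗ id) ∘ (id ⊗ P₂₁,ₙ)` on `A ⊗ (A ⊗ A)`. -/
noncomputable def P312 (n : ℤ) : A ⊗[K] (A ⊗[K] A) →ₗ[K] A ⊗[K] (A ⊗[K] A) :=
  tend12 (gflip 𝒜 n) ∘ₗ LinearMap.lTensor A (gflip 𝒜 n)

/-- The `n`-graded cyclic permutation `P₂₃₁,ₙ = (id ⊗ P₂₁,ₙ) ∘ (P₂₁,ₙ ⊗ id)`, which is the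
inverse of `P₃₁₂,ₙ`. -/
noncomputable def P231 (n : ℤ) : A ⊗[K] (A ⊗[K] A) →ₗ[K] A ⊗[K] (A ⊗[K] A) :=
  LinearMap.lTensor A (gflip 𝒜 n) ∘ₗ tend12 (gflip 𝒜 n)

/-- The tribracket `⟪−,−,−⟫ = Σ_{i=0}^{2} P₃₁₂^i (⟪−,−⟫⊗id)(id⊗⟪−,−⟫) P₃₁₂,ₙ^{−i}` induced by an
`n`-graded double bracket. -/
noncomputable def tribracket (n : ℤ) (db : A →ₗ[K] A →ₗ[K] A ⊗[K] A) :
    A ⊗[K] (A ⊗[K] A) →ₗ[K] A ⊗[K] (A ⊗[K] A) :=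
  letI D := TensorProduct.lift db
  letI T := tend12 D ∘ₗ LinearMap.lTensor A D
  T + P312 𝒜 0 ∘ₗ T ∘ₗ P231 𝒜 n
    + P312 𝒜 0 ∘ₗ P312 𝒜 0 ∘ₗ T ∘ₗ P231 𝒜 n ∘ₗ P231 𝒜 n

/-- The submodule `[A,A]` of a graded algebra, spanned by the graded commutators
`ab − (−1)^{|a||b|} ba` of homogeneous elements. -/
noncomputable def gradedCommutator (𝒜' : ℤ → Submodule K A) : Submodule K A :=
  Submodule.span K {x : A | ∃ (p q : ℤ) (a b : A),
    a ∈ 𝒜' p ∧ b ∈ 𝒜' q ∧ x = a * b - sgn (p * q) • (b * a)}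

end Graded

end PG
namespace PG

section RepAlg

variable {K : Type} [CommRing K]
variable {A : Type} [NonUnitalRing A] [Module K A] [SMulCommClass K A A] [IsScalarTower K A A]
variable {M : Type} [AddCommGroup M] [Module K M]
variable {R : Type} [NonUnitalRing R] [Module K R] [SMulCommClass K R R] [IsScalarTower K R R]

/-- The multiplicativity relation `(ab)_α = a_{α¹} b_{α²}` for a bilinear family
`ρ : A → M → R` of elements of an algebra `R`. -/
def MulRel (μ : M →ₗ[K] M ⊗[K] M) (ρ : A →ₗ[K] M →ₗ[K] R) : Prop :=
  ∀ (a b : A) (α : M),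
    ρ (a * b) α = LinearMap.mul' K R (TensorProduct.map (ρ a) (ρ b) (μ α))

/-- The grading condition: `a_α` is homogeneous of degree `|a|`. -/
def GradRel (𝒜 : ℤ → Submodule K A) (ℛ : ℤ → Submodule K R) (ρ : A →ₗ[K] M →ₗ[K] R) : Prop :=
  ∀ (p : ℤ) (a : A), a ∈ 𝒜 p → ∀ α : M, ρ a α ∈ ℛ p

/-- The generation condition: the symbols `a_α` generate `R` as a (non-unital) algebra. -/
def GenRel (ρ : A →ₗ[K] M →ₗ[K] R) : Prop :=
  NonUnitalAlgebra.adjoin K {x : R | ∃ (a : A) (α : M), ρ a α = x} = ⊤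

/-- The universal property of the representation algebra `A_M` among commutative graded
algebras: any bilinear family satisfying the grading and multiplicativity relations in a
commutative graded algebra `B` is induced by a unique graded algebra homomorphism `R → B`. -/
def UnivRelComm (μ : M →ₗ[K] M ⊗[K] M) (𝒜 : ℤ → Submodule K A) (ℛ : ℤ → Submodule K R)
    (ρ : A →ₗ[K] M →ₗ[K] R) : Prop :=
  ∀ (B : Type) [NonUnitalCommRing B] [Module K B] [SMulCommClass K B B] [IsScalarTower K B B],
  ∀ (ℬ : ℤ → Submodule K B) (σ : A →ₗ[K] M →ₗ[K] B),
    GradRel 𝒜 ℬ σ → MulRel μ σ →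
    ∃! F : R →ₙₐ[K] B, (∀ (p : ℤ) (x : R), x ∈ ℛ p → F x ∈ ℬ p) ∧
      ∀ (a : A) (α : M), F (ρ a α) = σ a α

/-- The universal property of the algebra `Ã_M` among all graded algebras. -/
def UnivRelNC (μ : M →ₗ[K] M ⊗[K] M) (𝒜 : ℤ → Submodule K A) (ℛ : ℤ → Submodule K R)
    (ρ : A →ₗ[K] M →ₗ[K] R) : Prop :=
  ∀ (B : Type) [NonUnitalRing B] [Module K B] [SMulCommClass K B B] [IsScalarTower K B B],
  ∀ (ℬ : ℤ → Submodule K B) (σ : A →ₗ[K] M →ₗ[K] B),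
    GradRel 𝒜 ℬ σ → MulRel μ σ →
    ∃! F : R →ₙₐ[K] B, (∀ (p : ℤ) (x : R), x ∈ ℛ p → F x ∈ ℬ p) ∧
      ∀ (a : A) (α : M), F (ρ a α) = σ a α

/-- `(R, ℛ, ρ)` is the representation algebra `A_M` of the graded algebra `(A, 𝒜)` with
respect to the coalgebra `(M, μ)`: `R` is commutative, the symbols `ρ a α = a_α` satisfy
the defining relations of `A_M`, generate `R`, and `R` has the universal property. -/
structure IsRepAlgebra (μ : M →ₗ[K] M ⊗[K] M) (𝒜 : ℤ → Submodule K A)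
    (ℛ : ℤ → Submodule K R) (ρ : A →ₗ[K] M →ₗ[K] R) : Prop where
  comm : ∀ x y : R, x * y = y * x
  mul_rel : MulRel μ ρ
  grad_rel : GradRel 𝒜 ℛ ρ
  gen_rel : GenRel ρ
  univ_rel : UnivRelComm μ 𝒜 ℛ ρ

/-- `(S, 𝒮, ρ)` is the algebra `Ã_M` of the graded algebra `(A, 𝒜)` with respect to the
coalgebra `(M, μ)`. -/
structure IsTildeRepAlgebra (μ : M →ₗ[K] M ⊗[K] M) (𝒜 : ℤ → Submodule K A)
    (ℛ : ℤ → Submodule K R) (ρ : A →ₗ[K] M →ₗ[K] R) : Prop where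
  mul_rel : MulRel μ ρ
  grad_rel : GradRel 𝒜 ℛ ρ
  gen_rel : GenRel ρ
  univ_rel : UnivRelNC μ 𝒜 ℛ ρ

/-- The pairing `(A ⊗ A) ⊗ (M ⊗ M) → R`, `(x ⊗ y) ⊗ (γ ⊗ δ) ↦ x_γ · y_δ`. -/
noncomputable def pair2 (ρ : A →ₗ[K] M →ₗ[K] R) :
    (A ⊗[K] A) ⊗[K] (M ⊗[K] M) →ₗ[K] R :=
  (LinearMap.mul' K R) ∘ₗ (TensorProduct.map (TensorProduct.lift ρ) (TensorProduct.lift ρ))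
    ∘ₗ (TensorProduct.tensorTensorTensorComm K A A M M).toLinearMap

/-- The pairing `(A ⊗ (A ⊗ A)) ⊗ (M ⊗ (M ⊗ M)) → R`,
`(x ⊗ (y ⊗ z)) ⊗ (γ ⊗ (δ ⊗ η)) ↦ x_γ · (y_δ · z_η)`. -/
noncomputable def pair3 (ρ : A →ₗ[K] M →ₗ[K] R) :
    (A ⊗[K] (A ⊗[K] A)) ⊗[K] (M ⊗[K] (M ⊗[K] M)) →ₗ[K] R :=
  (LinearMap.mul' K R) ∘ₗ (TensorProduct.map (TensorProduct.lift ρ) (pair2 ρ))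
    ∘ₗ (TensorProduct.tensorTensorTensorComm K A (A ⊗[K] A) M (M ⊗[K] M)).toLinearMap

/-- An `n`-graded biderivation on a graded algebra `(R, ℛ)`. -/
structure IsBider (ℛ : ℤ → Submodule K R) (n : ℤ) (br : R →ₗ[K] R →ₗ[K] R) : Prop where
  grading : ∀ (p q : ℤ) (x y : R), x ∈ ℛ p → y ∈ ℛ q → br x y ∈ ℛ (p + q + n)
  antisymm : ∀ (p q : ℤ) (x y : R), x ∈ ℛ p → y ∈ ℛ q →
    br x y = - (sgn ((p + n) * (q + n)) • br y x)
  leibniz : ∀ (p q : ℤ) (x y : R), x ∈ ℛ p → y ∈ ℛ q → ∀ z : R,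
    br x (y * z) = br x y * z + sgn ((p + n) * q) • (y * br x z)

/-- The defining formula `⟨a_α, b_β⟩_v = v(α ⊗ β²) ⟪a,b⟫′_{β¹} ⟪a,b⟫″_{β³}` of the bracket
induced on the representation algebra by a double bracket `db` and a bilinear form `v`. -/
noncomputable def BrFormula (μ : M →ₗ[K] M ⊗[K] M) (v : M ⊗[K] M →ₗ[K] K)
    (db : A →ₗ[K] A →ₗ[K] A ⊗[K] A) (ρ : A →ₗ[K] M →ₗ[K] R)
    (br : R →ₗ[K] R →ₗ[K] R) : Prop :=
  ∀ (a b : A) (α β : M),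
    br (ρ a α) (ρ b β) = pair2 ρ ((db a b) ⊗ₜ[K] (hat μ v (α ⊗ₜ[K] β)))

/-- A degree-zero derivation of a graded algebra `(R, ℛ)`. -/
def IsGDer (ℛ : ℤ → Submodule K R) (D : R →ₗ[K] R) : Prop :=
  (∀ (p : ℤ) (x : R), x ∈ ℛ p → D x ∈ ℛ p) ∧ ∀ x y : R, D (x * y) = D x * y + x * D y

/-- The Jacobi form of an `n`-graded bracket, evaluated on elements of degrees `p, q, r`. -/
noncomputable def jacobiForm (n : ℤ) (br : R →ₗ[K] R →ₗ[K] R) (p q r : ℤ) (x y z : R) : R :=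
  sgn ((p + n) * (r + n)) • br x (br y z) + sgn ((q + n) * (p + n)) • br y (br z x)
    + sgn ((r + n) * (q + n)) • br z (br x y)

/-- The fixed-point set `A_M^U` of the action of the group `U(M*)` of invertible elements of
the dual algebra `M*` on `R = A_M` (given by `u · a_α = a_{ᵘα}` on generators). -/
def fixUSet (μ : M →ₗ[K] M ⊗[K] M) (ε : M →ₗ[K] K) (ρ : A →ₗ[K] M →ₗ[K] R) : Set R :=
  {x : R | ∀ u w : M →ₗ[K] K, conv μ u w = ε → conv μ w u = ε →
    ∀ F : R →ₙₐ[K] R, (∀ (a : A) (α : M), F (ρ a α) = ρ a (innerAct μ w u α)) → F x = x}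

/-- The set `A_M^M` of elements of `R = A_M` annihilated by the derivations induced by all
inner coderivations `δ_φ`, `φ ∈ M*`. -/
def fixMSet (μ : M →ₗ[K] M ⊗[K] M) (ℛ : ℤ → Submodule K R) (ρ : A →ₗ[K] M →ₗ[K] R) : Set R :=
  {x : R | ∀ φ : M →ₗ[K] K, ∀ D : R →ₗ[K] R, IsGDer ℛ D →
    (∀ (a : A) (α : M), D (ρ a α) = ρ a (innerCoder μ φ α)) → D x = 0}

end RepAlg

end PG

namespace PGAux

variable {K : Type} [CommRing K]
variable {S : Type} [NonUnitalRing S] [Module K S] [SMulCommClass K S S] [IsScalarTower K S S]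

/-- Square-zero extension of `S` by itself. -/
def SqZ (S : Type) : Type := S × S

instance : AddCommGroup (SqZ S) := (inferInstance : AddCommGroup (S × S))
instance : Module K (SqZ S) := (inferInstance : Module K (S × S))

instance : Mul (SqZ S) := ⟨fun x y => (x.1 * y.1, x.1 * y.2 + x.2 * y.1)⟩

lemma SqZ.mul_def (x y : SqZ S) : x * y = (x.1 * y.1, x.1 * y.2 + x.2 * y.1) := rfl

lemma SqZ.ext' {x y : SqZ S} (h1 : x.1 = y.1) (h2 : x.2 = y.2) : x = y := Prod.ext h1 h2

lemma SqZ.fst_add (x y : SqZ S) : (x + y).1 = x.1 + y.1 := rfl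
lemma SqZ.snd_add (x y : SqZ S) : (x + y).2 = x.2 + y.2 := rfl
lemma SqZ.fst_smul (k : K) (x : SqZ S) : (k • x).1 = k • x.1 := rfl
lemma SqZ.snd_smul (k : K) (x : SqZ S) : (k • x).2 = k • x.2 := rfl

instance : NonUnitalRing (SqZ S) :=
  { (inferInstance : AddCommGroup (SqZ S)) with
    mul := (· * ·)
    left_distrib := fun a b c => SqZ.ext'
      (by show a.1 * (b.1 + c.1) = a.1 * b.1 + a.1 * c.1
          simp [SqZ.mul_def, SqZ.fst_add, SqZ.snd_add, mul_add])
      (by show a.1 * (b.2 + c.2) + a.2 * (b.1 + c.1) = (a.1 * b.2 + a.2 * b.1) + (a.1 * c.2 + a.2 * c.1)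
          simp [SqZ.mul_def, SqZ.fst_add, SqZ.snd_add, mul_add]; abel)
    right_distrib := fun a b c => SqZ.ext'
      (by show (a.1 + b.1) * c.1 = a.1 * c.1 + b.1 * c.1
          simp [SqZ.mul_def, SqZ.fst_add, SqZ.snd_add, add_mul])
      (by show (a.1 + b.1) * c.2 + (a.2 + b.2) * c.1 = (a.1 * c.2 + a.2 * c.1) + (b.1 * c.2 + b.2 * c.1)
          simp [SqZ.mul_def, SqZ.fst_add, SqZ.snd_add, add_mul]; abel)
    zero_mul := fun a => SqZ.ext' (by show (0 : S) * a.1 = 0; simp [SqZ.mul_def])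
      (by show (0 : S) * a.2 + 0 * a.1 = 0; simp [SqZ.mul_def])
    mul_zero := fun a => SqZ.ext' (by show a.1 * (0 : S) = 0; simp [SqZ.mul_def])
      (by show a.1 * (0 : S) + a.2 * 0 = 0; simp [SqZ.mul_def])
    mul_assoc := fun a b c => SqZ.ext'
      (by show a.1 * b.1 * c.1 = a.1 * (b.1 * c.1)
          simp [SqZ.mul_def, mul_assoc])
      (by show (a.1 * b.1) * c.2 + (a.1 * b.2 + a.2 * b.1) * c.1 = a.1 * (b.1 * c.2 + b.2 * c.1) + a.2 * (b.1 * c.1)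
          simp [SqZ.mul_def, SqZ.fst_add, SqZ.snd_add, mul_add, add_mul, mul_assoc]; abel) }

instance : SMulCommClass K (SqZ S) (SqZ S) :=
  ⟨fun k x y => SqZ.ext'
    (by show k • (x.1 * y.1) = x.1 * (k • y.1)
        simp [SqZ.mul_def, SqZ.fst_smul, mul_smul_comm])
    (by show k • (x.1 * y.2 + x.2 * y.1) = x.1 * (k • y.2) + x.2 * (k • y.1)
        simp [SqZ.mul_def, SqZ.snd_smul, SqZ.fst_smul, mul_smul_comm, smul_mul_assoc, smul_add])⟩

instance : IsScalarTower K (SqZ S) (SqZ S) :=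
  ⟨fun k x y => SqZ.ext'
    (by show (k • x.1) * y.1 = k • (x.1 * y.1)
        simp [SqZ.mul_def, SqZ.fst_smul, smul_mul_assoc])
    (by show (k • x.1) * y.2 + (k • x.2) * y.1 = k • (x.1 * y.2 + x.2 * y.1)
        simp [SqZ.mul_def, SqZ.snd_smul, SqZ.fst_smul, mul_smul_comm, smul_mul_assoc, smul_add])⟩

/-- First projection as a linear map. -/
def SqZ.fstL : SqZ S →ₗ[K] S := ⟨⟨fun x => x.1, fun _ _ => rfl⟩, fun _ _ => rfl⟩
/-- Second projection as a linear map. -/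
def SqZ.sndL : SqZ S →ₗ[K] S := ⟨⟨fun x => x.2, fun _ _ => rfl⟩, fun _ _ => rfl⟩

/-- First projection as a non-unital algebra hom. -/
def SqZ.fstA : SqZ S →ₙₐ[K] S :=
  { toFun := fun x => x.1
    map_smul' := fun _ _ => rfl
    map_zero' := rfl
    map_add' := fun _ _ => rfl
    map_mul' := fun _ _ => rfl }

/-- The grading on `SqZ S` induced by a grading on `S`. -/
def SqZ.gr (𝒮 : ℤ → Submodule K S) (p : ℤ) : Submodule K (SqZ S) where
  carrier := {x | x.1 ∈ 𝒮 p ∧ x.2 ∈ 𝒮 p}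
  add_mem' := fun hx hy => ⟨add_mem hx.1 hy.1, add_mem hx.2 hy.2⟩
  zero_mem' := ⟨zero_mem _, zero_mem _⟩
  smul_mem' := fun k x hx => ⟨Submodule.smul_mem _ k hx.1, Submodule.smul_mem _ k hx.2⟩

end PGAux


namespace PGAux

open PG

variable {K : Type} [CommRing K]
variable {A : Type} [NonUnitalRing A] [Module K A] [SMulCommClass K A A] [IsScalarTower K A A]
variable {M : Type} [AddCommGroup M] [Module K M]
variable {S : Type} [NonUnitalRing S] [Module K S] [SMulCommClass K S S] [IsScalarTower K S S]

/-- The bilinear family `a ↦ α ↦ (a_α, a_{δα})` into the square-zero extension. -/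
noncomputable def σmap (ρ : A →ₗ[K] M →ₗ[K] S) (δ : M →ₗ[K] M) :
    A →ₗ[K] M →ₗ[K] SqZ S :=
  LinearMap.mk₂ K (fun a α => ((ρ a α, ρ a (δ α)) : SqZ S))
    (fun a b α => SqZ.ext'
      (by show ρ (a + b) α = ρ a α + ρ b α; simp)
      (by show ρ (a + b) (δ α) = ρ a (δ α) + ρ b (δ α); simp))
    (fun c a α => SqZ.ext'
      (by show ρ (c • a) α = c • ρ a α; simp)
      (by show ρ (c • a) (δ α) = c • ρ a (δ α); simp))
    (fun a α β => SqZ.ext'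
      (by show ρ a (α + β) = ρ a α + ρ a β; simp)
      (by show ρ a (δ (α + β)) = ρ a (δ α) + ρ a (δ β); simp))
    (fun c a α => SqZ.ext'
      (by show ρ a (c • α) = c • ρ a α; simp)
      (by show ρ a (δ (c • α)) = c • ρ a (δ α); simp))

lemma σmap_apply (ρ : A →ₗ[K] M →ₗ[K] S) (δ : M →ₗ[K] M) (a : A) (α : M) :
    σmap ρ δ a α = ((ρ a α, ρ a (δ α)) : SqZ S) := rfl

lemma sigma_mulRel (μ : M →ₗ[K] M ⊗[K] M) (ρ : A →ₗ[K] M →ₗ[K] S)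
    (hρ : MulRel μ ρ) (δ : M →ₗ[K] M) (hδ : IsCoderivation μ δ) :
    MulRel μ (σmap ρ δ) := by
  intro a b α
  set L : M ⊗[K] M →ₗ[K] SqZ S :=
    LinearMap.mul' K (SqZ S) ∘ₗ TensorProduct.map (σmap ρ δ a) (σmap ρ δ b) with hL
  have hfst : (SqZ.fstL (K := K)) ∘ₗ L
      = LinearMap.mul' K S ∘ₗ TensorProduct.map (ρ a) (ρ b) := by
    apply TensorProduct.ext'
    intro β γ
    rfl
  have hsnd : (SqZ.sndL (K := K)) ∘ₗ L
      = (LinearMap.mul' K S ∘ₗ TensorProduct.map (ρ a) (ρ b))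
          ∘ₗ (δ.rTensor M + δ.lTensor M) := by
    apply TensorProduct.ext'
    intro β γ
    show (σmap ρ δ a β * σmap ρ δ b γ).2
      = LinearMap.mul' K S (TensorProduct.map (ρ a) (ρ b) (δ β ⊗ₜ[K] γ + β ⊗ₜ[K] δ γ))
    rw [SqZ.mul_def]
    simp [σmap_apply, SqZ.mul_def, add_comm]
  have hμδ : μ (δ α) = (δ.rTensor M + δ.lTensor M) (μ α) := by
    have := congrArg (fun f => f α) hδ
    simpa using this
  apply SqZ.ext'
  · show ρ (a * b) α = ((SqZ.fstL (K := K)) ∘ₗ L) (μ α)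
    rw [hfst]
    exact hρ a b α
  · show ρ (a * b) (δ α) = ((SqZ.sndL (K := K)) ∘ₗ L) (μ α)
    rw [hsnd]
    simpa [hμδ] using hρ a b (δ α)

lemma sigma_gradRel (𝒜 : ℤ → Submodule K A) (𝒮 : ℤ → Submodule K S)
    (ρ : A →ₗ[K] M →ₗ[K] S) (hρ : GradRel 𝒜 𝒮 ρ) (δ : M →ₗ[K] M) :
    GradRel 𝒜 (SqZ.gr 𝒮) (σmap ρ δ) :=
  fun p a ha α => ⟨hρ p a ha α, hρ p a ha (δ α)⟩

/-- Uniqueness of a derivation given its values on generators. -/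
lemma der_ext (ρ : A →ₗ[K] M →ₗ[K] S) (hgen : GenRel ρ) (D D' : S →ₗ[K] S)
    (hD : ∀ x y : S, D (x * y) = D x * y + x * D y)
    (hD' : ∀ x y : S, D' (x * y) = D' x * y + x * D' y)
    (h : ∀ (a : A) (α : M), D (ρ a α) = D' (ρ a α)) : D = D' := by
  ext x
  have hx : x ∈ NonUnitalAlgebra.adjoin K {x : S | ∃ (a : A) (α : M), ρ a α = x} := by
    rw [hgen]; trivial
  induction hx using NonUnitalAlgebra.adjoin_induction with
  | mem x hx => obtain ⟨a, α, rfl⟩ := hx; exact h a α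
  | add x y _ _ hx hy => simp [map_add, hx, hy]
  | zero => simp
  | mul x y _ _ hx hy => rw [hD, hD', hx, hy]
  | smul r x _ hx => simp [map_smul, hx]

/-- Existence of the degree-zero derivation induced by a coderivation. -/
lemma exists_gder (μ : M →ₗ[K] M ⊗[K] M) (𝒜 : ℤ → Submodule K A)
    (𝒮 : ℤ → Submodule K S) (ρ : A →ₗ[K] M →ₗ[K] S)
    (hrep : IsTildeRepAlgebra μ 𝒜 𝒮 ρ) (δ : M →ₗ[K] M) (hδ : IsCoderivation μ δ) :
    ∃ D : S →ₗ[K] S, IsGDer 𝒮 D ∧ ∀ (a : A) (α : M), D (ρ a α) = ρ a (δ α) := by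
  obtain ⟨F, ⟨hFgr, hFval⟩, _⟩ := hrep.univ_rel (SqZ S) (SqZ.gr 𝒮) (σmap ρ δ)
    (sigma_gradRel 𝒜 𝒮 ρ hrep.grad_rel δ) (sigma_mulRel μ ρ hrep.mul_rel δ hδ)
  -- the first component of F is the identity
  have hfst : ∀ x : S, (F x).1 = x := by
    obtain ⟨F₀, _, hFuniq⟩ := hrep.univ_rel S 𝒮 ρ hrep.grad_rel hrep.mul_rel
    have h1 : (SqZ.fstA (K := K)).comp F = F₀ := by
      apply hFuniq
      constructor
      · intro p x hx
        exact (hFgr p x hx).1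
      · intro a α
        show (F (ρ a α)).1 = ρ a α
        rw [hFval a α]; rfl
    have h2 : NonUnitalAlgHom.id K S = F₀ := by
      apply hFuniq
      exact ⟨fun p x hx => hx, fun a α => rfl⟩
    intro x
    have := congrArg (fun G => G x) (h1.trans h2.symm)
    exact this
  refine ⟨(SqZ.sndL (K := K)) ∘ₗ
    (⟨⟨F, map_add F⟩, map_smul F⟩ : S →ₗ[K] SqZ S), ⟨?_, ?_⟩, ?_⟩
  · intro p x hx
    exact (hFgr p x hx).2
  · intro x y
    show (F (x * y)).2 = (F x).2 * y + x * (F y).2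
    rw [map_mul, SqZ.mul_def, hfst, hfst]
    exact add_comm _ _
  · intro a α
    show (F (ρ a α)).2 = ρ a (δ α)
    rw [hFval a α]; rfl

end PGAux

/-- for a graded algebra `A` and a coalgebra `M` there is a unique action of the
Lie algebra `coder(M)` of coderivations of `M` on `Ã_M` by degree-zero derivations (i.e. a
Lie algebra homomorphism `coder(M) → der(Ã_M)`) such that `δ(a_α) = a_{δ(α)}`. -/

theorem statement_9 {K A M S : Type} [CommRing K]
    [NonUnitalRing A] [Module K A] [SMulCommClass K A A] [IsScalarTower K A A]
    (𝒜 : ℤ → Submodule K A) [SetLike.GradedMul 𝒜] [DirectSum.Decomposition 𝒜]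
    [AddCommGroup M] [Module K M] (μ : M →ₗ[K] M ⊗[K] M) (hμ : PG.Coassoc μ)
    [NonUnitalRing S] [Module K S] [SMulCommClass K S S] [IsScalarTower K S S]
    (𝒮 : ℤ → Submodule K S) [SetLike.GradedMul 𝒮] [DirectSum.Decomposition 𝒮]
    (ρ : A →ₗ[K] M →ₗ[K] S) (hrep : PG.IsTildeRepAlgebra μ 𝒜 𝒮 ρ) :
    ∃! Ψ : {δ : M →ₗ[K] M // PG.IsCoderivation μ δ} → (S →ₗ[K] S),
      (∀ δ, PG.IsGDer 𝒮 (Ψ δ)) ∧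
      (∀ δ (a : A) (α : M), Ψ δ (ρ a α) = ρ a (δ.1 α)) ∧
      (∀ δ d e : {δ : M →ₗ[K] M // PG.IsCoderivation μ δ},
        e.1 = δ.1 + d.1 → Ψ e = Ψ δ + Ψ d) ∧
      (∀ (c : K) (δ e : {δ : M →ₗ[K] M // PG.IsCoderivation μ δ}),
        e.1 = c • δ.1 → Ψ e = c • Ψ δ) ∧
      (∀ δ d e : {δ : M →ₗ[K] M // PG.IsCoderivation μ δ},
        e.1 = δ.1 ∘ₗ d.1 - d.1 ∘ₗ δ.1 → Ψ e = Ψ δ ∘ₗ Ψ d - Ψ d ∘ₗ Ψ δ) := by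
  classical
  have key : ∀ δ : {δ : M →ₗ[K] M // PG.IsCoderivation μ δ},
      ∃ D : S →ₗ[K] S, PG.IsGDer 𝒮 D ∧ ∀ (a : A) (α : M), D (ρ a α) = ρ a (δ.1 α) :=
    fun δ => PGAux.exists_gder μ 𝒜 𝒮 ρ hrep δ.1 δ.2
  choose Ψ hΨder hΨval using key
  have uniq : ∀ (δ : {δ : M →ₗ[K] M // PG.IsCoderivation μ δ}) (D : S →ₗ[K] S),
      PG.IsGDer 𝒮 D → (∀ (a : A) (α : M), D (ρ a α) = ρ a (δ.1 α)) → D = Ψ δ := by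
    intro δ D hD hval
    exact PGAux.der_ext ρ hrep.gen_rel D (Ψ δ) hD.2 (hΨder δ).2
      (fun a α => by rw [hval, hΨval])
  refine ⟨Ψ, ⟨hΨder, hΨval, ?_, ?_, ?_⟩, ?_⟩
  · -- additivity
    intro δ d e he
    refine (uniq e (Ψ δ + Ψ d) ⟨?_, ?_⟩ ?_).symm
    · intro p x hx
      exact add_mem ((hΨder δ).1 p x hx) ((hΨder d).1 p x hx)
    · intro x y
      simp only [LinearMap.add_apply, (hΨder δ).2 x y, (hΨder d).2 x y, add_mul, mul_add]
      abel
    · intro a α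
      show (Ψ δ) (ρ a α) + (Ψ d) (ρ a α) = ρ a (e.1 α)
      rw [hΨval, hΨval, he]
      simp
  · -- scalar multiplication
    intro c δ e he
    refine (uniq e (c • Ψ δ) ⟨?_, ?_⟩ ?_).symm
    · intro p x hx
      exact Submodule.smul_mem _ c ((hΨder δ).1 p x hx)
    · intro x y
      simp only [LinearMap.smul_apply, (hΨder δ).2 x y, smul_add, smul_mul_assoc,
        mul_smul_comm]
    · intro a α
      show c • (Ψ δ) (ρ a α) = ρ a (e.1 α)
      rw [hΨval, he]
      simp
  · -- bracket
    intro δ d e he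
    refine (uniq e (Ψ δ ∘ₗ Ψ d - Ψ d ∘ₗ Ψ δ) ⟨?_, ?_⟩ ?_).symm
    · intro p x hx
      exact sub_mem ((hΨder δ).1 p _ ((hΨder d).1 p x hx))
        ((hΨder d).1 p _ ((hΨder δ).1 p x hx))
    · intro x y
      simp only [LinearMap.sub_apply, LinearMap.comp_apply, (hΨder δ).2, (hΨder d).2,
        map_add, map_sub, sub_mul, mul_sub]
      abel
    · intro a α
      show (Ψ δ) ((Ψ d) (ρ a α)) - (Ψ d) ((Ψ δ) (ρ a α)) = ρ a (e.1 α)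
      simp only [hΨval]
      rw [he]
      simp
  · -- uniqueness of Ψ
    intro Ψ' ⟨h1, h2, _, _, _⟩
    funext δ
    exact uniq δ (Ψ' δ) (h1 δ) (h2 δ)
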